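/- For all x ∈ (0, π/2]: ((4√2 - 2)/(7π))·(x + sin x + 8 sin(x/2)) < Si(x) < (1/6)·(x + sin x + 8 sin(x/2)), where Si(x) = ∫₀ˣ (sin t)/t dt. -/

import Mathlib

open Real Set MeasureTheory intervalIntegral

private lemma nonneg_aux (f f' : ℝ → ℝ) (hder : ∀ t, HasDerivAt f (f' t) t)
    (h0 : f 0 = 0) (hpos : ∀ t, 0 ≤ t → 0 ≤ f' t) {t : ℝ} (ht : 0 ≤ t) : 0 ≤ f t := by
  have hmono : MonotoneOn f (Set.Ici 0) := by
    apply monotoneOn_of_deriv_nonneg (convex_Ici 0)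
    · exact fun s _ => (hder s).continuousAt.continuousWithinAt
    · exact fun s _ => (hder s).differentiableAt.differentiableWithinAt
    · intro s hs
      rw [interior_Ici] at hs
      rw [(hder s).deriv]
      exact hpos s hs.le
  calc (0:ℝ) = f 0 := h0.symm
  _ ≤ f t := hmono (Set.mem_Ici.2 le_rfl) (Set.mem_Ici.2 ht) ht

private lemma s3 {t : ℝ} (ht : 0 ≤ t) : t - t^3/6 ≤ Real.sin t := by
  have h := nonneg_aux (fun s => Real.sin s - (s - s^3/6))
      (fun s => Real.cos s - (1 - s^2/2)) ?_ (by simp) ?_ ht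
  · linarith [h]
  · intro s
    have h1 := (Real.hasDerivAt_sin s).sub
      ((hasDerivAt_id s).sub ((hasDerivAt_pow 3 s).div_const 6))
    convert h1 using 1
    · rfl
    · rfl
    · ext; simp
    norm_num
    ring
  · intro s _
    nlinarith [Real.one_sub_sq_div_two_le_cos (x := s)]

private lemma c4 {t : ℝ} (ht : 0 ≤ t) : Real.cos t ≤ 1 - t^2/2 + t^4/24 := by
  have h := nonneg_aux (fun s => (1 - s^2/2 + s^4/24) - Real.cos s)
      (fun s => Real.sin s - (s - s^3/6)) ?_ (by simp) ?_ ht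
  · linarith [h]
  · intro s
    have h1 := (((hasDerivAt_const s (1:ℝ)).sub ((hasDerivAt_pow 2 s).div_const 2)).add
      ((hasDerivAt_pow 4 s).div_const 24)).sub (Real.hasDerivAt_cos s)
    convert h1 using 1
    · rfl
    · rfl
    · ext; simp
    norm_num
    ring
  · intro s hs
    nlinarith [s3 hs]

private lemma s5 {t : ℝ} (ht : 0 ≤ t) : Real.sin t ≤ t - t^3/6 + t^5/120 := by
  have h := nonneg_aux (fun s => (s - s^3/6 + s^5/120) - Real.sin s)
      (fun s => (1 - s^2/2 + s^4/24) - Real.cos s) ?_ (by simp) ?_ ht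
  · linarith [h]
  · intro s
    have h1 := (((hasDerivAt_id s).sub ((hasDerivAt_pow 3 s).div_const 6)).add
      ((hasDerivAt_pow 5 s).div_const 120)).sub (Real.hasDerivAt_sin s)
    convert h1 using 1
    · rfl
    · rfl
    · ext; simp
    norm_num
    ring
  · intro s hs
    nlinarith [c4 hs]

private lemma c6 {t : ℝ} (ht : 0 ≤ t) : 1 - t^2/2 + t^4/24 - t^6/720 ≤ Real.cos t := by
  have h := nonneg_aux (fun s => Real.cos s - (1 - s^2/2 + s^4/24 - s^6/720))
      (fun s => (s - s^3/6 + s^5/120) - Real.sin s) ?_ (by simp) ?_ ht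
  · linarith [h]
  · intro s
    have h1 := (Real.hasDerivAt_cos s).sub
      ((((hasDerivAt_const s (1:ℝ)).sub ((hasDerivAt_pow 2 s).div_const 2)).add
      ((hasDerivAt_pow 4 s).div_const 24)).sub ((hasDerivAt_pow 6 s).div_const 720))
    convert h1 using 1
    · rfl
    · rfl
    · ext; simp
    norm_num
    ring
  · intro s hs
    nlinarith [s5 hs]

private lemma s7 {t : ℝ} (ht : 0 ≤ t) : t - t^3/6 + t^5/120 - t^7/5040 ≤ Real.sin t := by
  have h := nonneg_aux (fun s => Real.sin s - (s - s^3/6 + s^5/120 - s^7/5040))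
      (fun s => Real.cos s - (1 - s^2/2 + s^4/24 - s^6/720)) ?_ (by simp) ?_ ht
  · linarith [h]
  · intro s
    have h1 := (Real.hasDerivAt_sin s).sub
      ((((hasDerivAt_id s).sub ((hasDerivAt_pow 3 s).div_const 6)).add
      ((hasDerivAt_pow 5 s).div_const 120)).sub ((hasDerivAt_pow 7 s).div_const 5040))
    convert h1 using 1
    · rfl
    · rfl
    · ext; simp
    norm_num
    ring
  · intro s hs
    nlinarith [c6 hs]

private lemma c8 {t : ℝ} (ht : 0 ≤ t) :
    Real.cos t ≤ 1 - t^2/2 + t^4/24 - t^6/720 + t^8/40320 := by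
  have h := nonneg_aux (fun s => (1 - s^2/2 + s^4/24 - s^6/720 + s^8/40320) - Real.cos s)
      (fun s => Real.sin s - (s - s^3/6 + s^5/120 - s^7/5040)) ?_ (by simp) ?_ ht
  · linarith [h]
  · intro s
    have h1 := (((((hasDerivAt_const s (1:ℝ)).sub ((hasDerivAt_pow 2 s).div_const 2)).add
      ((hasDerivAt_pow 4 s).div_const 24)).sub ((hasDerivAt_pow 6 s).div_const 720)).add
      ((hasDerivAt_pow 8 s).div_const 40320)).sub (Real.hasDerivAt_cos s)
    convert h1 using 1
    · rfl
    · rfl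
    · ext; simp
    norm_num
    ring
  · intro s hs
    linarith [s7 hs]

private lemma s9 {t : ℝ} (ht : 0 ≤ t) :
    Real.sin t ≤ t - t^3/6 + t^5/120 - t^7/5040 + t^9/362880 := by
  have h := nonneg_aux
      (fun s => (s - s^3/6 + s^5/120 - s^7/5040 + s^9/362880) - Real.sin s)
      (fun s => (1 - s^2/2 + s^4/24 - s^6/720 + s^8/40320) - Real.cos s) ?_ (by simp) ?_ ht
  · linarith [h]
  · intro s
    have h1 := (((((hasDerivAt_id s).sub ((hasDerivAt_pow 3 s).div_const 6)).add
      ((hasDerivAt_pow 5 s).div_const 120)).sub ((hasDerivAt_pow 7 s).div_const 5040)).add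
      ((hasDerivAt_pow 9 s).div_const 362880)).sub (Real.hasDerivAt_sin s)
    convert h1 using 1
    · rfl
    · rfl
    · ext; simp
    norm_num
    ring
  · intro s hs
    nlinarith [c8 hs]

set_option maxHeartbeats 1000000 in
theorem stmt19 (x : ℝ) (hx : x ∈ Set.Ioc 0 (Real.pi/2)) :
    ((4*Real.sqrt 2 - 2)/(7*Real.pi)) * (x + Real.sin x + 8*Real.sin (x/2))
      < ∫ t in (0:ℝ)..x, Real.sin t / t ∧
    (∫ t in (0:ℝ)..x, Real.sin t / t)
      < (1/6) * (x + Real.sin x + 8*Real.sin (x/2)) := by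
  obtain ⟨hx0, hxp⟩ := hx
  have hpi_lo : (3.141592:ℝ) < Real.pi := by
    have := Real.pi_gt_d6; linarith
  have hpi_hi : Real.pi < 3.141593 := by
    have := Real.pi_lt_d6; linarith
  have hx157 : x ≤ 1.5707965 := by linarith
  have hx2 : x^2 ≤ 2.46741 := by nlinarith
  have hx4 : x^4 ≤ 6.0882 := by nlinarith
  have hx6 : x^6 ≤ 15.0222 := by nlinarith
  have hs2 : Real.sqrt 2 ^ 2 = 2 := Real.sq_sqrt (by norm_num)
  have hs0 : (0:ℝ) < Real.sqrt 2 := Real.sqrt_pos.2 (by norm_num)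
  have hs_lo : (1.414213:ℝ) < Real.sqrt 2 := by nlinarith
  have hs_hi : Real.sqrt 2 < 1.414214 := by nlinarith
  have e3 : x^3 ≤ 2.46741*x := by nlinarith
  have e5 : x^5 ≤ 6.0882*x := by nlinarith
  have e7 : x^7 ≤ 15.0222*x := by nlinarith
  have e75 : x^7 ≤ 2.46741*x^5 := by nlinarith [pow_pos hx0 5]
  have e95 : x^9 ≤ 6.0882*x^5 := by nlinarith [pow_pos hx0 5]
  -- integrability of sin t / t on Ioc 0 x
  have hintOn : IntegrableOn (fun t => Real.sin t / t) (Set.Ioc 0 x) := by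
    apply Measure.integrableOn_of_bounded (M := 1) (measure_Ioc_lt_top).ne
      ((Real.measurable_sin.div measurable_id).aestronglyMeasurable)
    filter_upwards with t
    rw [Real.norm_eq_abs, Pi.div_apply, abs_div]
    simp only [id_eq]
    rcases eq_or_ne t 0 with h | h
    · simp [h]
    · rw [div_le_one (abs_pos.2 h)]
      exact Real.abs_sin_le_abs
  have hI : (∫ t in (0:ℝ)..x, Real.sin t / t) = ∫ t in Set.Ioc 0 x, Real.sin t / t :=
    intervalIntegral.integral_of_le hx0.le
  have hlowcont : Continuous (fun t : ℝ => 1 - t^2/6 + t^4/120 - t^6/5040) := by continuity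
  have hhicont : Continuous (fun t : ℝ => 1 - t^2/6 + t^4/120 - t^6/5040 + t^8/362880) := by
    continuity
  have hlow_eval : (∫ t in (0:ℝ)..x, (1 - t^2/6 + t^4/120 - t^6/5040))
      = x - x^3/18 + x^5/600 - x^7/35280 := by
    have hder : ∀ t ∈ Set.uIcc (0:ℝ) x,
        HasDerivAt (fun s => s - s^3/18 + s^5/600 - s^7/35280)
          (1 - t^2/6 + t^4/120 - t^6/5040) t := by
      intro t _
      have h1 := (((hasDerivAt_id t).sub ((hasDerivAt_pow 3 t).div_const 18)).add
        ((hasDerivAt_pow 5 t).div_const 600)).sub ((hasDerivAt_pow 7 t).div_const 35280)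
      convert h1 using 1
      · rfl
      · rfl
      · ext; simp
      norm_num
      ring
    rw [intervalIntegral.integral_eq_sub_of_hasDerivAt hder
      (hlowcont.intervalIntegrable 0 x)]
    norm_num
  have hhi_eval : (∫ t in (0:ℝ)..x, (1 - t^2/6 + t^4/120 - t^6/5040 + t^8/362880))
      = x - x^3/18 + x^5/600 - x^7/35280 + x^9/3265920 := by
    have hder : ∀ t ∈ Set.uIcc (0:ℝ) x,
        HasDerivAt (fun s => s - s^3/18 + s^5/600 - s^7/35280 + s^9/3265920)
          (1 - t^2/6 + t^4/120 - t^6/5040 + t^8/362880) t := by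
      intro t _
      have h1 := ((((hasDerivAt_id t).sub ((hasDerivAt_pow 3 t).div_const 18)).add
        ((hasDerivAt_pow 5 t).div_const 600)).sub ((hasDerivAt_pow 7 t).div_const 35280)).add
        ((hasDerivAt_pow 9 t).div_const 3265920)
      convert h1 using 1
      · rfl
      · rfl
      · ext; simp
      norm_num
      ring
    rw [intervalIntegral.integral_eq_sub_of_hasDerivAt hder
      (hhicont.intervalIntegrable 0 x)]
    norm_num
  have hSi_lo : x - x^3/18 + x^5/600 - x^7/35280 ≤ ∫ t in (0:ℝ)..x, Real.sin t / t := by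
    rw [hI, ← hlow_eval, intervalIntegral.integral_of_le hx0.le]
    apply setIntegral_mono_on (hlowcont.integrableOn_Ioc) hintOn measurableSet_Ioc
    intro t ht
    rw [le_div_iff₀ ht.1]
    nlinarith [s7 ht.1.le]
  have hSi_hi : (∫ t in (0:ℝ)..x, Real.sin t / t)
      ≤ x - x^3/18 + x^5/600 - x^7/35280 + x^9/3265920 := by
    rw [hI, ← hhi_eval, intervalIntegral.integral_of_le hx0.le]
    apply setIntegral_mono_on hintOn (hhicont.integrableOn_Ioc) measurableSet_Ioc
    intro t ht
    rw [div_le_iff₀ ht.1]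
    nlinarith [s9 ht.1.le]
  have hx20 : (0:ℝ) ≤ x/2 := by linarith
  have hg_hi : x + Real.sin x + 8*Real.sin (x/2) ≤ 6*(x - x^3/18 + x^5/576) := by
    linarith [s5 hx0.le, s5 hx20]
  have hg_lo : 6*(x - x^3/18 + x^5/576 - 17*x^7/483840)
      ≤ x + Real.sin x + 8*Real.sin (x/2) := by
    linarith [s7 hx0.le, s7 hx20]
  constructor
  · -- lower bound
    have hc_pos : (0:ℝ) < 4*Real.sqrt 2 - 2 := by nlinarith
    have hp_pos : (0:ℝ) < 7*Real.pi := by linarith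
    have step1 : ((4*Real.sqrt 2 - 2)/(7*Real.pi)) * (x + Real.sin x + 8*Real.sin (x/2))
        ≤ ((4*Real.sqrt 2 - 2)/(7*Real.pi)) * (6*(x - x^3/18 + x^5/576)) :=
      mul_le_mul_of_nonneg_left hg_hi (le_of_lt (div_pos hc_pos hp_pos))
    have step2 : ((4*Real.sqrt 2 - 2)/(7*Real.pi)) * (6*(x - x^3/18 + x^5/576))
        < x - x^3/18 + x^5/600 - x^7/35280 := by
      rw [div_mul_eq_mul_div, div_lt_iff₀ hp_pos]
      -- main positive term
      have hco : (0.05:ℝ) ≤ 7*Real.pi - 24*Real.sqrt 2 + 12 := by linarith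
      have hP : (0.8629:ℝ)*x ≤ x - x^3/18 := by linarith
      have h2 : (0.05:ℝ)*((0.8629:ℝ)*x) ≤ (7*Real.pi - 24*Real.sqrt 2 + 12)*(x - x^3/18) :=
        mul_le_mul hco hP (by positivity) (by linarith)
      -- error terms
      have hx5nn : (0:ℝ) ≤ x^5 := by positivity
      have hx7nn : (0:ℝ) ≤ x^7 := by positivity
      have hA : (24*Real.sqrt 2 - 12)*(x^5/576) - 7*Real.pi*(x^5/600) ≤ 0.00145*(6.0882*x) := by
        have h1 : (24*Real.sqrt 2 - 12)*(x^5/576) - 7*Real.pi*(x^5/600) ≤ 0.00145*x^5 := by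
          nlinarith
        nlinarith
      have hB : 7*Real.pi*(x^7/35280) ≤ (22:ℝ)/35280*(15.0222*x) := by
        nlinarith
      nlinarith [h2, hA, hB]
    linarith [hSi_lo]
  · -- upper bound
    have step2 : x - x^3/18 + x^5/600 - x^7/35280 + x^9/3265920
        < x - x^3/18 + x^5/576 - 17*x^7/483840 := by
      linarith [e75, e95, pow_pos hx0 5]
    linarith [hSi_hi, hg_lo]
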